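/- Let H be a complex Hilbert space, Ψ ∈ H a unit vector, Q a positive integer, and A a finite nonempty set. For each q ∈ {1,...,Q} let {X_q^a}_{a∈A} and {Y_q^a}_{a∈A} be families of positive bounded operators on H with Σ_a (X_q^a)² = I and Σ_a (Y_q^a)² = I, such that X_q^a Y_{q'}^{a'} = Y_{q'}^{a'} X_q^a for all q, q' ∈ {1,...,Q} and a, a' ∈ A. Define d_1(q) = D( (X_q^a Ψ)_a, (Y_q^a Ψ)_a ) and d_4(q, q') = D( (X_{q'}^{a'} X_q^{a} Ψ)_{(a,a')}, (X_q^{a} X_{q'}^{a'} Ψ)_{(a,a')} ). Then for every m ≥ 1, every t_1,...,t_m ∈ {1,...,Q}, and every i with 1 ≤ i ≤ m, (1/2) Σ_{z∈A^m} | ‖X_{t_m}^{z_m} X_{t_{m-1}}^{z_{m-1}} ··· X_{t_1}^{z_1} Ψ‖² − ‖X_{t_m}^{z_m} ··· X_{t_{i+1}}^{z_{i+1}} X_{t_{i-1}}^{z_{i-1}} ··· X_{t_1}^{z_1} X_{t_i}^{z_i} Ψ‖² | ≤ 2 Σ_{j=1}^{i-1} d_1(t_j) + Σ_{j=1}^{i-1}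 d_4(t_i, t_j). -/

import Mathlib

open scoped ComplexInnerProductSpace

/-- `D(u, v) = √(1 − |⟨u, v⟩|²)` for families `(u_s)`, `(v_s)` of vectors, viewed as vectors of
the Hilbert space direct sum `⊕_s H` (whose inner product is `Σ_s ⟪u_s, v_s⟫`). -/
noncomputable def tdistFam {H : Type*} [NormedAddCommGroup H] [InnerProductSpace ℂ H]
    {S : Type*} [Fintype S] (u v : S → H) : ℝ :=
  Real.sqrt (1 - ‖∑ s, ⟪u s, v s⟫‖ ^ 2)

/-- The ordered product `T_m * T_{m-1} * ⋯ * T_1` of a finite family of operators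
(the operator with index `1`, i.e. `f 0`, is applied first). -/
def revProd {H : Type*} [NormedAddCommGroup H] [InnerProductSpace ℂ H]
    {m : ℕ} (f : Fin m → (H →L[ℂ] H)) : H →L[ℂ] H :=
  (List.ofFn f).reverse.prod

section Infra

variable {H : Type*} [NormedAddCommGroup H] [InnerProductSpace ℂ H] [CompleteSpace H]
variable {A : Type*} [Fintype A] [Nonempty A]

/-- collapse a single channel layer -/
lemma sum_inner_collapse (N : A → (H →L[ℂ] H)) (hsa : ∀ a, IsSelfAdjoint (N a))
    (hsq : ∑ a, N a ^ 2 = 1) (u v : H) :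
    ∑ a, ⟪N a u, N a v⟫ = ⟪u, v⟫ := by
  have h1 : ∀ a, ⟪N a u, N a v⟫ = ⟪u, (N a ^ 2) v⟫ := by
    intro a
    have h := ContinuousLinearMap.adjoint_inner_left (N a) (N a v) u
    rw [(hsa a).adjoint_eq] at h
    rw [sq, ContinuousLinearMap.mul_apply]
    exact h
  simp_rw [h1, ← inner_sum]
  rw [← ContinuousLinearMap.sum_apply, hsq, ContinuousLinearMap.one_apply]

variable {ι : Type*} [Fintype ι] [DecidableEq ι]

lemma fiber_collapse (j : ι) (N : A → (H →L[ℂ] H)) (hsa : ∀ a, IsSelfAdjoint (N a))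
    (hsq : ∑ a, N a ^ 2 = 1) (F G : (ι → A) → H)
    (hF : ∀ z z' : ι → A, (∀ k, k ≠ j → z k = z' k) → F z = F z')
    (hG : ∀ z z' : ι → A, (∀ k, k ≠ j → z k = z' k) → G z = G z') :
    (Fintype.card A : ℂ) * ∑ z : ι → A, ⟪N (z j) (F z), N (z j) (G z)⟫
      = ∑ z : ι → A, ⟪F z, G z⟫ := by
  classical
  set e := Equiv.piSplitAt j (fun _ : ι => A) with he
  have hsymm : ∀ (p : A × ({ k // k ≠ j } → A)), (e.symm p) j = p.1 := by
    intro p; simp [he, Equiv.piSplitAt_symm_apply]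
  have hsymm' : ∀ (p : A × ({ k // k ≠ j } → A)) (k : ι) (hk : k ≠ j),
      (e.symm p) k = p.2 ⟨k, hk⟩ := by
    intro p k hk; simp [he, Equiv.piSplitAt_symm_apply, hk]
  obtain ⟨a₀⟩ := ‹Nonempty A›
  have key : ∀ (Φ : (ι → A) → H)
      (hΦ : ∀ z z' : ι → A, (∀ k, k ≠ j → z k = z' k) → Φ z = Φ z')
      (p : A × ({ k // k ≠ j } → A)), Φ (e.symm p) = Φ (e.symm (a₀, p.2)) := by
    intro Φ hΦ p
    apply hΦ
    intro k hk
    rw [hsymm' _ _ hk, hsymm' _ _ hk]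
  have hreindex : ∀ (Φ : (ι → A) → ℂ),
      ∑ z : ι → A, Φ z = ∑ p : A × ({ k // k ≠ j } → A), Φ (e.symm p) :=
    fun Φ => Fintype.sum_equiv e.symm (fun p => Φ (e.symm p)) Φ (fun _ => rfl) |>.symm
  rw [hreindex (fun z => ⟪N (z j) (F z), N (z j) (G z)⟫),
      hreindex (fun z => ⟪F z, G z⟫)]
  rw [Fintype.sum_prod_type, Fintype.sum_prod_type]
  have lhs_eq : ∀ p2 : { k // k ≠ j } → A,
      ∑ a : A, ⟪N ((e.symm (a, p2)) j) (F (e.symm (a, p2))), N ((e.symm (a, p2)) j) (G (e.symm (a, p2)))⟫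
        = ⟪F (e.symm (a₀, p2)), G (e.symm (a₀, p2))⟫ := by
    intro p2
    have : ∀ a : A,
        ⟪N ((e.symm (a, p2)) j) (F (e.symm (a, p2))), N ((e.symm (a, p2)) j) (G (e.symm (a, p2)))⟫
          = ⟪N a (F (e.symm (a₀, p2))), N a (G (e.symm (a₀, p2)))⟫ := by
      intro a
      rw [hsymm (a, p2), key F hF (a, p2), key G hG (a, p2)]
    simp_rw [this]
    exact sum_inner_collapse N hsa hsq _ _
  rw [Finset.sum_comm]
  calc (Fintype.card A : ℂ) * ∑ p2 : { k // k ≠ j } → A, ∑ a : A,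
        ⟪N ((e.symm (a, p2)) j) (F (e.symm (a, p2))), N ((e.symm (a, p2)) j) (G (e.symm (a, p2)))⟫
      = (Fintype.card A : ℂ) * ∑ p2 : { k // k ≠ j } → A,
          ⟪F (e.symm (a₀, p2)), G (e.symm (a₀, p2))⟫ := by
        congr 1; exact Finset.sum_congr rfl fun p2 _ => lhs_eq p2
    _ = ∑ a : A, ∑ p2 : { k // k ≠ j } → A, ⟪F (e.symm (a, p2)), G (e.symm (a, p2))⟫ := by
        simp_rw [fun (a : A) (p2 : { k // k ≠ j } → A) => key F hF (a, p2),
          fun (a : A) (p2 : { k // k ≠ j } → A) => key G hG (a, p2)]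
        rw [Finset.sum_const, Finset.card_univ, nsmul_eq_mul]
    _ = _ := by rw [Finset.sum_comm]

set_option linter.unusedSectionVars false

/-- collapse a list of channel layers, with `x y` depending only on coordinates outside `l` -/
lemma list_collapse (σ' : ι → A → (H →L[ℂ] H))
    (hsa : ∀ j a, IsSelfAdjoint (σ' j a)) (hsq : ∀ j, ∑ a, σ' j a ^ 2 = 1) :
    ∀ (l : List ι), l.Nodup → ∀ (x y : (ι → A) → H),
    (∀ z z' : ι → A, (∀ j, j ∉ l → z j = z' j) → x z = x z') →
    (∀ z z' : ι → A, (∀ j, j ∉ l → z j = z' j) → y z = y z') →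
    (Fintype.card A : ℂ) ^ l.length *
        ∑ z : ι → A, ⟪(l.map fun j => σ' j (z j)).prod (x z),
          (l.map fun j => σ' j (z j)).prod (y z)⟫
      = ∑ z : ι → A, ⟪x z, y z⟫ := by
  intro l
  induction l with
  | nil => intro _ x y _ _; simp
  | cons j l' ih =>
    intro hnd x y hx hy
    have hjl' : j ∉ l' := (List.nodup_cons.mp hnd).1
    have hnd' : l'.Nodup := (List.nodup_cons.mp hnd).2
    set F : (ι → A) → H := fun z => (l'.map fun k => σ' k (z k)).prod (x z) with hF
    set G : (ι → A) → H := fun z => (l'.map fun k => σ' k (z k)).prod (y z) with hG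
    have hFind : ∀ z z' : ι → A, (∀ k, k ≠ j → z k = z' k) → F z = F z' := by
      intro z z' hzz
      have h1 : (l'.map fun k => σ' k (z k)) = (l'.map fun k => σ' k (z' k)) :=
        List.map_congr_left fun k hk => by rw [hzz k (fun h => hjl' (h ▸ hk))]
      have h2 : x z = x z' := hx z z' fun k hk => hzz k (fun h => hk (h ▸ List.mem_cons_self (a := j) (l := l')))
      rw [hF]; dsimp only; rw [h1, h2]
    have hGind : ∀ z z' : ι → A, (∀ k, k ≠ j → z k = z' k) → G z = G z' := by
      intro z z' hzz
      have h1 : (l'.map fun k => σ' k (z k)) = (l'.map fun k => σ' k (z' k)) :=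
        List.map_congr_left fun k hk => by rw [hzz k (fun h => hjl' (h ▸ hk))]
      have h2 : y z = y z' := hy z z' fun k hk => hzz k (fun h => hk (h ▸ List.mem_cons_self (a := j) (l := l')))
      rw [hG]; dsimp only; rw [h1, h2]
    have step := fiber_collapse j (σ' j) (hsa j) (hsq j) F G hFind hGind
    have hx' : ∀ z z' : ι → A, (∀ k, k ∉ l' → z k = z' k) → x z = x z' := by
      intro z z' hzz
      exact hx z z' fun k hk => hzz k (fun h => hk (List.mem_cons_of_mem j h))
    have hy' : ∀ z z' : ι → A, (∀ k, k ∉ l' → z k = z' k) → y z = y z' := by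
      intro z z' hzz
      exact hy z z' fun k hk => hzz k (fun h => hk (List.mem_cons_of_mem j h))
    have ihres := ih hnd' x y hx' hy'
    calc (Fintype.card A : ℂ) ^ (j :: l').length *
          ∑ z : ι → A, ⟪((j :: l').map fun k => σ' k (z k)).prod (x z),
            ((j :: l').map fun k => σ' k (z k)).prod (y z)⟫
        = (Fintype.card A : ℂ) ^ l'.length * ((Fintype.card A : ℂ) *
            ∑ z : ι → A, ⟪σ' j (z j) (F z), σ' j (z j) (G z)⟫) := by
          simp only [List.length_cons, List.map_cons, List.prod_cons,
            ContinuousLinearMap.mul_apply, pow_succ]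
          ring
      _ = (Fintype.card A : ℂ) ^ l'.length * ∑ z : ι → A, ⟪F z, G z⟫ := by rw [step]
      _ = ∑ z : ι → A, ⟪x z, y z⟫ := ihres

lemma sum_coord_gen (k : ι) (Fc : A → ℂ) :
    ∑ z : ι → A, Fc (z k) = (Fintype.card A : ℂ) ^ (Fintype.card ι - 1) * ∑ b, Fc b := by
  classical
  set e := Equiv.piSplitAt k (fun _ : ι => A) with he
  have hreindex : ∑ z : ι → A, Fc (z k) = ∑ p : A × ({ j // j ≠ k } → A), Fc ((e.symm p) k) :=
    (Fintype.sum_equiv e.symm (fun p => Fc ((e.symm p) k)) (fun z => Fc (z k)) (fun _ => rfl)).symm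
  rw [hreindex]
  have hsymm : ∀ (p : A × ({ j // j ≠ k } → A)), (e.symm p) k = p.1 := by
    intro p; simp [he, Equiv.piSplitAt_symm_apply]
  simp_rw [hsymm]
  rw [Fintype.sum_prod_type]
  simp_rw [Finset.sum_const, Finset.card_univ, nsmul_eq_mul]
  rw [← Finset.mul_sum]
  have hcard : Fintype.card ({ j // j ≠ k } → A) = Fintype.card A ^ (Fintype.card ι - 1) := by
    rw [Fintype.card_fun, Fintype.card_subtype_compl, Fintype.card_subtype_eq]
  rw [hcard]
  push_cast
  ring

lemma sum_coord_two (k k' : ι) (hkk : k ≠ k') (Fc : A → A → ℂ) :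
    ∑ z : ι → A, Fc (z k) (z k')
      = (Fintype.card A : ℂ) ^ (Fintype.card ι - 2) * ∑ a, ∑ b, Fc a b := by
  classical
  set e := Equiv.piSplitAt k (fun _ : ι => A) with he
  have hreindex : ∑ z : ι → A, Fc (z k) (z k')
      = ∑ p : A × ({ j // j ≠ k } → A), Fc ((e.symm p) k) ((e.symm p) k') :=
    (Fintype.sum_equiv e.symm _ (fun z => Fc (z k) (z k')) (fun _ => rfl)).symm
  rw [hreindex]
  have hsymm : ∀ (p : A × ({ j // j ≠ k } → A)), (e.symm p) k = p.1 := by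
    intro p; simp [he, Equiv.piSplitAt_symm_apply]
  have hsymm' : ∀ (p : A × ({ j // j ≠ k } → A)), (e.symm p) k' = p.2 ⟨k', Ne.symm hkk⟩ := by
    intro p; simp [he, Equiv.piSplitAt_symm_apply, Ne.symm hkk]
  simp_rw [hsymm, hsymm']
  rw [Fintype.sum_prod_type]
  have inner_eq : ∀ a : A, ∑ p2 : { j // j ≠ k } → A, Fc a (p2 ⟨k', Ne.symm hkk⟩)
      = (Fintype.card A : ℂ) ^ (Fintype.card { j // j ≠ k } - 1) * ∑ b, Fc a b := by
    intro a
    exact sum_coord_gen (⟨k', Ne.symm hkk⟩ : { j // j ≠ k }) (fun b => Fc a b)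
  simp_rw [inner_eq]
  rw [← Finset.mul_sum]
  have hcard : Fintype.card { j // j ≠ k } - 1 = Fintype.card ι - 2 := by
    rw [Fintype.card_subtype_compl, Fintype.card_subtype_eq]
    omega
  rw [hcard]

end Infra

section TV

variable {H : Type*} [NormedAddCommGroup H] [InnerProductSpace ℂ H]
variable {S : Type*} [Fintype S]

lemma tdistFam_nonneg (u v : S → H) : 0 ≤ tdistFam u v := Real.sqrt_nonneg _

lemma tv_le_tdistFam (u v : S → H) (hu : ∑ s, ‖u s‖ ^ 2 = 1) (hv : ∑ s, ‖v s‖ ^ 2 = 1) :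
    (1 / 2) * ∑ s, |‖u s‖ ^ 2 - ‖v s‖ ^ 2| ≤ tdistFam u v := by
  set a : S → ℝ := fun s => ‖u s‖ with ha
  set b : S → ℝ := fun s => ‖v s‖ with hb
  set Sab : ℝ := ∑ s, a s * b s with hSab
  have hSab_nonneg : 0 ≤ Sab :=
    Finset.sum_nonneg fun s _ => mul_nonneg (norm_nonneg _) (norm_nonneg _)
  have hSab_le_one : Sab ≤ 1 := by
    have h := Finset.sum_mul_sq_le_sq_mul_sq Finset.univ a b
    rw [hu, hv, mul_one] at h
    nlinarith [hSab_nonneg]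
  have hNle : ‖∑ s, ⟪u s, v s⟫‖ ≤ Sab := by
    calc ‖∑ s, ⟪u s, v s⟫‖ ≤ ∑ s, ‖(⟪u s, v s⟫ : ℂ)‖ := norm_sum_le _ _
      _ ≤ ∑ s, a s * b s := Finset.sum_le_sum fun s _ => norm_inner_le_norm _ _
  have key : (∑ s, |a s ^ 2 - b s ^ 2|) ^ 2 ≤ 4 * (1 - Sab ^ 2) := by
    have h1 : ∀ s, |a s ^ 2 - b s ^ 2| = |a s - b s| * (a s + b s) := by
      intro s
      have he : a s ^ 2 - b s ^ 2 = (a s - b s) * (a s + b s) := by ring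
      rw [he, abs_mul, abs_of_nonneg (by positivity : (0:ℝ) ≤ a s + b s)]
    simp_rw [h1]
    have hcs := Finset.sum_mul_sq_le_sq_mul_sq Finset.univ (fun s => |a s - b s|)
      (fun s => a s + b s)
    have h2 : ∑ s, |a s - b s| ^ 2 = 2 - 2 * Sab := by
      have : ∀ s, |a s - b s| ^ 2 = a s ^ 2 + b s ^ 2 - 2 * (a s * b s) := by
        intro s; rw [sq_abs]; ring
      simp_rw [this]
      rw [Finset.sum_sub_distrib, Finset.sum_add_distrib]
      have hu' : ∑ s, a s ^ 2 = 1 := hu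
      have hv' : ∑ s, b s ^ 2 = 1 := hv
      rw [hu', hv', ← Finset.mul_sum, ← hSab]
      ring
    have h3 : ∑ s, (a s + b s) ^ 2 = 2 + 2 * Sab := by
      have : ∀ s, (a s + b s) ^ 2 = a s ^ 2 + b s ^ 2 + 2 * (a s * b s) := fun s => by ring
      simp_rw [this]
      rw [Finset.sum_add_distrib, Finset.sum_add_distrib]
      have hu' : ∑ s, a s ^ 2 = 1 := hu
      have hv' : ∑ s, b s ^ 2 = 1 := hv
      rw [hu', hv', ← Finset.mul_sum, ← hSab]
      ring
    calc (∑ s, |a s - b s| * (a s + b s)) ^ 2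
        ≤ (∑ s, |a s - b s| ^ 2) * ∑ s, (a s + b s) ^ 2 := hcs
      _ = (2 - 2 * Sab) * (2 + 2 * Sab) := by rw [h2, h3]
      _ = 4 * (1 - Sab ^ 2) := by ring
  have habs_nonneg : 0 ≤ ∑ s, |a s ^ 2 - b s ^ 2| := Finset.sum_nonneg fun s _ => abs_nonneg _
  have hfin : ‖∑ s, ⟪u s, v s⟫‖ ^ 2 ≤ Sab ^ 2 := by
    apply sq_le_sq' <;> nlinarith [norm_nonneg (∑ s, ⟪u s, v s⟫)]
  rw [tdistFam]
  rw [Real.le_sqrt (by positivity) (by nlinarith)]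
  nlinarith [key]

lemma tdistFam_eq_of_norm_eq {S' : Type*} [Fintype S'] (u v : S → H) (x y : S' → H)
    (h : ‖∑ s, ⟪u s, v s⟫‖ = ‖∑ s, ⟪x s, y s⟫‖) : tdistFam u v = tdistFam x y := by
  rw [tdistFam, tdistFam, h]

lemma tdistFam_comm (u v : S → H) : tdistFam u v = tdistFam v u := by
  rw [tdistFam, tdistFam]
  congr 3
  have : (∑ s, (⟪v s, u s⟫ : ℂ)) = starRingEnd ℂ (∑ s, (⟪u s, v s⟫ : ℂ)) := by
    rw [map_sum]
    exact Finset.sum_congr rfl fun s _ => (inner_conj_symm (v s) (u s)).symm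
  rw [this, RCLike.norm_conj]

end TV

section Lists

variable {m : ℕ}

/-- the list `[a, a+1, …, b-1]` (truncated at `m`) as elements of `Fin m` -/
def aFromTo (m : ℕ) : ℕ → ℕ → List (Fin m)
  | a, b =>
    if h : a < min b m then ⟨a, lt_of_lt_of_le h (min_le_right _ _)⟩ :: aFromTo m (a + 1) b
    else []
  termination_by a b => b - a
  decreasing_by omega

lemma aFromTo_eq_cons {a b : ℕ} (h : a < b) (hm : a < m) :
    aFromTo m a b = ⟨a, hm⟩ :: aFromTo m (a + 1) b := by
  rw [aFromTo, dif_pos (lt_min h hm)]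

lemma aFromTo_eq_nil {a b : ℕ} (h : ¬ a < min b m) : aFromTo m a b = [] := by
  rw [aFromTo, dif_neg h]

lemma aFromTo_self (a b : ℕ) (h : b ≤ a) : aFromTo m a b = [] :=
  aFromTo_eq_nil (by omega)

lemma mem_aFromTo {a b : ℕ} {x : Fin m} :
    x ∈ aFromTo m a b ↔ a ≤ x.val ∧ x.val < b := by
  generalize hk : b - a = k
  induction k generalizing a with
  | zero =>
    rw [aFromTo_eq_nil (by omega)]
    simp only [List.not_mem_nil, false_iff, not_and]
    omega
  | succ k ih =>
    have hab : a < b := by omega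
    by_cases hm : a < m
    · rw [aFromTo_eq_cons hab hm, List.mem_cons, ih (by omega)]
      constructor
      · rintro (rfl | ⟨h1, h2⟩)
        · exact ⟨le_refl _, hab⟩
        · exact ⟨by omega, h2⟩
      · rintro ⟨h1, h2⟩
        rcases Nat.lt_or_ge a x.val with h | h
        · right; exact ⟨h, h2⟩
        · left; exact Fin.ext (show x.val = a by omega)
    · rw [aFromTo_eq_nil (by omega)]
      have := x.isLt
      simp only [List.not_mem_nil, false_iff, not_and]
      omega

lemma nodup_aFromTo {a b : ℕ} : (aFromTo m a b).Nodup := by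
  generalize hk : b - a = k
  induction k generalizing a with
  | zero => rw [aFromTo_eq_nil (by omega)]; exact List.nodup_nil
  | succ k ih =>
    by_cases hm : a < min b m
    · rw [aFromTo_eq_cons (by omega) (by omega)]
      refine List.nodup_cons.mpr ⟨?_, ih (by omega)⟩
      rw [mem_aFromTo]
      exact fun hc => Nat.not_succ_le_self a hc.1
    · rw [aFromTo_eq_nil hm]; exact List.nodup_nil

lemma length_aFromTo {a b : ℕ} (hb : b ≤ m) : (aFromTo m a b).length = b - a := by
  generalize hk : b - a = k
  induction k generalizing a with
  | zero => rw [aFromTo_eq_nil (by omega), List.length_nil]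
  | succ k ih =>
    rw [aFromTo_eq_cons (by omega) (by omega), List.length_cons, ih (by omega)]

lemma aFromTo_append {a c b : ℕ} (hac : a ≤ c) (hcb : c ≤ b) (hb : b ≤ m) :
    aFromTo m a b = aFromTo m a c ++ aFromTo m c b := by
  generalize hk : c - a = k
  induction k generalizing a with
  | zero =>
    have : a = c := by omega
    subst this
    rw [aFromTo_self a a (le_refl _), List.nil_append]
  | succ k ih =>
    have hac' : a < c := by omega
    rw [aFromTo_eq_cons (by omega) (by omega), aFromTo_eq_cons hac' (by omega),
      List.cons_append, ih (by omega) (by omega)]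

lemma aFromTo_singleton {a : ℕ} (ha : a < m) :
    aFromTo m a (a + 1) = [⟨a, ha⟩] := by
  rw [aFromTo_eq_cons (by omega) ha, aFromTo_self _ _ (le_refl _)]

lemma getElem_aFromTo : ∀ (n a : ℕ) (hn : n < (aFromTo m a m).length) (w : a + n < m),
    (aFromTo m a m)[n] = ⟨a + n, w⟩ := by
  intro n
  induction n with
  | zero =>
    intro a hn w
    have ha : a < m := by omega
    rw [List.getElem_of_eq (aFromTo_eq_cons ha ha)]
    simp
  | succ n ih =>
    intro a hn w
    have ha : a < m := by omega
    have hn' : n + 1 < (⟨a, ha⟩ :: aFromTo m (a + 1) m).length := by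
      rw [← aFromTo_eq_cons ha ha]; exact hn
    rw [List.getElem_of_eq (aFromTo_eq_cons ha ha)]
    simp only [List.getElem_cons_succ]
    rw [ih (a + 1) (by simp at hn' ⊢; omega) (by omega)]
    apply Fin.ext
    simp only
    omega

lemma aFromTo_zero_eq_finRange : aFromTo m 0 m = List.finRange m := by
  apply List.ext_getElem
  · rw [length_aFromTo (le_refl m), List.length_finRange]
    omega
  · intro n h1 h2
    have hw : 0 + n < m := by
      rw [length_aFromTo (le_refl m)] at h1; omega
    rw [getElem_aFromTo n 0 h1 hw, List.getElem_finRange]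
    apply Fin.ext
    simp

end Lists

section ListOps

variable {α : Type*} {β : Type*}

lemma eraseIdx_append_cons (l₁ : List α) (g : α) (l₂ : List α) :
    (l₁ ++ g :: l₂).eraseIdx l₁.length = l₁ ++ l₂ := by
  induction l₁ with
  | nil => rfl
  | cons x l ih => simp [List.eraseIdx, ih]

lemma map_eraseIdx (f : α → β) (l : List α) (n : ℕ) :
    (l.map f).eraseIdx n = (l.eraseIdx n).map f := by
  induction l generalizing n with
  | nil => rfl
  | cons x l ih =>
    cases n with
    | zero => rfl
    | succ n => simp [List.eraseIdx, ih]

lemma prod_move {M : Type*} [Monoid M] (l₁ l₂ l₃ : List M) (g : M)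
    (hc : ∀ x ∈ l₂, Commute g x) :
    (l₁ ++ [g] ++ l₂ ++ l₃).prod = (l₁ ++ l₂ ++ [g] ++ l₃).prod := by
  have h : Commute g l₂.prod := Commute.list_prod_right _ _ hc
  simp only [List.prod_append, List.prod_cons, List.prod_nil, mul_one]
  rw [mul_assoc, mul_assoc, ← mul_assoc g, h.eq]
  simp [mul_assoc]

end ListOps

section Keys

variable {H : Type*} [NormedAddCommGroup H] [InnerProductSpace ℂ H] [CompleteSpace H]
variable {A : Type*} [Fintype A] [Nonempty A]
variable {ι : Type*} [Fintype ι] [DecidableEq ι]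

lemma real_sum_norm_sq_eq_one {S : Type*} [Fintype S] (u : S → H)
    (h : ∑ s, (⟪u s, u s⟫ : ℂ) = 1) : ∑ s, ‖u s‖ ^ 2 = 1 := by
  have h2 : ((∑ s, ‖u s‖ ^ 2 : ℝ) : ℂ) = 1 := by
    push_cast
    rw [← h]
    exact Finset.sum_congr rfl fun s _ => by
      rw [inner_self_eq_norm_sq_to_K]; norm_cast
  exact_mod_cast h2

lemma cardA_pow_ne_zero (n : ℕ) : ((Fintype.card A : ℂ)) ^ n ≠ 0 :=
  pow_ne_zero _ (Nat.cast_ne_zero.mpr Fintype.card_pos.ne')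

lemma key_overlap (σ' : ι → A → (H →L[ℂ] H))
    (hsa : ∀ j a, IsSelfAdjoint (σ' j a)) (hsq : ∀ j, ∑ a, σ' j a ^ 2 = 1)
    (l : List ι) (hnd : l.Nodup) (hlen : l.length + 1 = Fintype.card ι)
    (k : ι) (hk : k ∉ l) (x y : A → H) :
    ∑ z : ι → A, ⟪(l.map fun j => σ' j (z j)).prod (x (z k)),
        (l.map fun j => σ' j (z j)).prod (y (z k))⟫ = ∑ b, ⟪x b, y b⟫ := by
  have hxind : ∀ z z' : ι → A, (∀ j, j ∉ l → z j = z' j) → x (z k) = x (z' k) :=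
    fun z z' hz => by rw [hz k hk]
  have hyind : ∀ z z' : ι → A, (∀ j, j ∉ l → z j = z' j) → y (z k) = y (z' k) :=
    fun z z' hz => by rw [hz k hk]
  have hcol := list_collapse σ' hsa hsq l hnd (fun z => x (z k)) (fun z => y (z k)) hxind hyind
  have hsc := sum_coord_gen k (fun b => (⟪x b, y b⟫ : ℂ))
  rw [hsc] at hcol
  have hexp : Fintype.card ι - 1 = l.length := by omega
  rw [hexp] at hcol
  exact mul_left_cancel₀ (cardA_pow_ne_zero l.length) hcol

lemma key_overlap_two (σ' : ι → A → (H →L[ℂ] H))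
    (hsa : ∀ j a, IsSelfAdjoint (σ' j a)) (hsq : ∀ j, ∑ a, σ' j a ^ 2 = 1)
    (l : List ι) (hnd : l.Nodup) (hlen : l.length + 2 = Fintype.card ι)
    (k k' : ι) (hkk' : k ≠ k') (hk : k ∉ l) (hk' : k' ∉ l) (B C : A → A → H) :
    ∑ z : ι → A, ⟪(l.map fun j => σ' j (z j)).prod (B (z k) (z k')),
        (l.map fun j => σ' j (z j)).prod (C (z k) (z k'))⟫ = ∑ a, ∑ b, ⟪B a b, C a b⟫ := by
  have hxind : ∀ z z' : ι → A, (∀ j, j ∉ l → z j = z' j) → B (z k) (z k') = B (z' k) (z' k') :=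
    fun z z' hz => by rw [hz k hk, hz k' hk']
  have hyind : ∀ z z' : ι → A, (∀ j, j ∉ l → z j = z' j) → C (z k) (z k') = C (z' k) (z' k') :=
    fun z z' hz => by rw [hz k hk, hz k' hk']
  have hcol := list_collapse σ' hsa hsq l hnd (fun z => B (z k) (z k'))
    (fun z => C (z k) (z k')) hxind hyind
  have hsc := sum_coord_two k k' hkk' (fun a b => (⟪B a b, C a b⟫ : ℂ))
  rw [hsc] at hcol
  have hexp : Fintype.card ι - 2 = l.length := by omega
  rw [hexp] at hcol
  exact mul_left_cancel₀ (cardA_pow_ne_zero l.length) hcol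

lemma key1 (σ' : ι → A → (H →L[ℂ] H))
    (hsa : ∀ j a, IsSelfAdjoint (σ' j a)) (hsq : ∀ j, ∑ a, σ' j a ^ 2 = 1)
    (l : List ι) (hnd : l.Nodup) (hlen : l.length + 1 = Fintype.card ι)
    (k : ι) (hk : k ∉ l) (x y : A → H)
    (hx1 : ∑ b, (⟪x b, x b⟫ : ℂ) = 1) (hy1 : ∑ b, (⟪y b, y b⟫ : ℂ) = 1) :
    (1 / 2) * ∑ z : ι → A, |‖(l.map fun j => σ' j (z j)).prod (x (z k))‖ ^ 2 -
        ‖(l.map fun j => σ' j (z j)).prod (y (z k))‖ ^ 2|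
      ≤ tdistFam x y := by
  set u : (ι → A) → H := fun z => (l.map fun j => σ' j (z j)).prod (x (z k)) with hu
  set v : (ι → A) → H := fun z => (l.map fun j => σ' j (z j)).prod (y (z k)) with hv
  have hun : ∑ z, ‖u z‖ ^ 2 = 1 := real_sum_norm_sq_eq_one u <| by
    rw [key_overlap σ' hsa hsq l hnd hlen k hk x x, hx1]
  have hvn : ∑ z, ‖v z‖ ^ 2 = 1 := real_sum_norm_sq_eq_one v <| by
    rw [key_overlap σ' hsa hsq l hnd hlen k hk y y, hy1]
  have h := tv_le_tdistFam u v hun hvn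
  rwa [tdistFam_eq_of_norm_eq u v x y
    (congrArg norm (key_overlap σ' hsa hsq l hnd hlen k hk x y))] at h

lemma key2 (σ' : ι → A → (H →L[ℂ] H))
    (hsa : ∀ j a, IsSelfAdjoint (σ' j a)) (hsq : ∀ j, ∑ a, σ' j a ^ 2 = 1)
    (l : List ι) (hnd : l.Nodup) (hlen : l.length + 2 = Fintype.card ι)
    (k k' : ι) (hkk' : k ≠ k') (hk : k ∉ l) (hk' : k' ∉ l) (B C : A → A → H)
    (hB : ∑ a, ∑ b, (⟪B a b, B a b⟫ : ℂ) = 1) (hC : ∑ a, ∑ b, (⟪C a b, C a b⟫ : ℂ) = 1) :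
    (1 / 2) * ∑ z : ι → A, |‖(l.map fun j => σ' j (z j)).prod (B (z k) (z k'))‖ ^ 2 -
        ‖(l.map fun j => σ' j (z j)).prod (C (z k) (z k'))‖ ^ 2|
      ≤ tdistFam (fun p : A × A => B p.1 p.2) (fun p : A × A => C p.1 p.2) := by
  set u : (ι → A) → H := fun z => (l.map fun j => σ' j (z j)).prod (B (z k) (z k')) with hu
  set v : (ι → A) → H := fun z => (l.map fun j => σ' j (z j)).prod (C (z k) (z k')) with hv
  have hun : ∑ z, ‖u z‖ ^ 2 = 1 := real_sum_norm_sq_eq_one u <| by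
    rw [key_overlap_two σ' hsa hsq l hnd hlen k k' hkk' hk hk' B B, hB]
  have hvn : ∑ z, ‖v z‖ ^ 2 = 1 := real_sum_norm_sq_eq_one v <| by
    rw [key_overlap_two σ' hsa hsq l hnd hlen k k' hkk' hk hk' C C, hC]
  have h := tv_le_tdistFam u v hun hvn
  have hnorm : ‖∑ z, ⟪u z, v z⟫‖ = ‖∑ p : A × A, ⟪B p.1 p.2, C p.1 p.2⟫‖ := by
    rw [key_overlap_two σ' hsa hsq l hnd hlen k k' hkk' hk hk' B C, Fintype.sum_prod_type]
  rwa [tdistFam_eq_of_norm_eq u v _ _ hnorm] at h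

end Keys

section Main

variable {H : Type*} [NormedAddCommGroup H] [InnerProductSpace ℂ H] [CompleteSpace H]
variable {A : Type*} [Fintype A] [Nonempty A]
variable {Qn m : ℕ}

/-- the operator assignment where questions before `s` have been switched to `Y` -/
def sigT (X Y : Fin Qn → A → (H →L[ℂ] H)) (t : Fin m → Fin Qn) (s : ℕ) :
    Fin m → A → (H →L[ℂ] H) :=
  fun j => if j.val < s then Y (t j) else X (t j)

/-- the state produced by applying the ops listed in `l` (last applied first) to `Ψ` -/
def stF (Ψ : H) (σ' : Fin m → A → (H →L[ℂ] H)) (l : List (Fin m)) (z : Fin m → A) : H :=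
  ((l.map fun j => σ' j (z j)).prod) Ψ

/-- phase-one waypoint list -/
def PAl (m : ℕ) (k : ℕ) : List (Fin m) :=
  aFromTo m 0 k ++ (aFromTo m (k + 1) m).reverse ++ aFromTo m k (k + 1)

/-- phase-three waypoint list -/
def RLl (m : ℕ) (iv : ℕ) (k : ℕ) : List (Fin m) :=
  aFromTo m 0 k ++ (aFromTo m (iv + 1) m).reverse ++ (aFromTo m k iv).reverse ++
    aFromTo m iv (iv + 1)

noncomputable def d1v (X Y : Fin Qn → A → (H →L[ℂ] H)) (t : Fin m → Fin Qn) (Ψ : H)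
    (s : ℕ) : ℝ :=
  if h : s < m then
    tdistFam (fun a => X (t ⟨s, h⟩) a Ψ) (fun a => Y (t ⟨s, h⟩) a Ψ) else 0

noncomputable def d4v (X : Fin Qn → A → (H →L[ℂ] H)) (t : Fin m → Fin Qn) (Ψ : H)
    (i : Fin m) (s : ℕ) : ℝ :=
  if h : s < m then
    tdistFam (fun p : A × A => X (t ⟨s, h⟩) p.2 (X (t i) p.1 Ψ))
      (fun p : A × A => X (t i) p.1 (X (t ⟨s, h⟩) p.2 Ψ)) else 0

variable (X Y : Fin Qn → A → (H →L[ℂ] H)) (t : Fin m → Fin Qn) (Ψ : H)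

lemma sigT_sa (hXpos : ∀ q a, (X q a).IsPositive) (hYpos : ∀ q a, (Y q a).IsPositive)
    (s : ℕ) : ∀ j a, IsSelfAdjoint (sigT X Y t s j a) := by
  intro j a
  unfold sigT
  split_ifs
  · exact (hYpos _ a).isSelfAdjoint
  · exact (hXpos _ a).isSelfAdjoint

lemma sigT_sq (hXsum : ∀ q, ∑ a, X q a ^ 2 = 1) (hYsum : ∀ q, ∑ a, Y q a ^ 2 = 1)
    (s : ℕ) : ∀ j, ∑ a, sigT X Y t s j a ^ 2 = 1 := by
  intro j
  unfold sigT
  split_ifs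
  · exact hYsum _
  · exact hXsum _

lemma stF_snoc (σ' : Fin m → A → (H →L[ℂ] H)) (l : List (Fin m)) (k : Fin m) (z : Fin m → A) :
    stF Ψ σ' (l ++ [k]) z = ((l.map fun j => σ' j (z j)).prod) (σ' k (z k) Ψ) := by
  simp [stF, List.prod_append, ContinuousLinearMap.mul_apply]

lemma stF_snoc2 (σ' : Fin m → A → (H →L[ℂ] H)) (l : List (Fin m)) (k k' : Fin m)
    (z : Fin m → A) :
    stF Ψ σ' (l ++ [k, k']) z
      = ((l.map fun j => σ' j (z j)).prod) (σ' k (z k) (σ' k' (z k') Ψ)) := by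
  have : l ++ [k, k'] = (l ++ [k]) ++ [k'] := by simp
  rw [this]
  simp [stF, List.prod_append, ContinuousLinearMap.mul_apply, mul_assoc]

end Main

section Main2

variable {H : Type*} [NormedAddCommGroup H] [InnerProductSpace ℂ H] [CompleteSpace H]
variable {A : Type*} [Fintype A] [Nonempty A]
variable {Qn m : ℕ}
variable (X Y : Fin Qn → A → (H →L[ℂ] H)) (t : Fin m → Fin Qn) (Ψ : H)

lemma prod_map_move (fn : Fin m → (H →L[ℂ] H)) (l₁ l₂ l₃ : List (Fin m)) (g : Fin m)
    (hc : ∀ x ∈ l₂, Commute (fn g) (fn x)) :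
    ((l₁ ++ [g] ++ l₂ ++ l₃).map fn).prod = ((l₁ ++ l₂ ++ [g] ++ l₃).map fn).prod := by
  simp only [List.map_append, List.map_cons, List.map_nil]
  exact prod_move _ _ _ _ (by
    intro x hx
    obtain ⟨j, hj, rfl⟩ := List.mem_map.mp hx
    exact hc j hj)

lemma linkI (hcomm : ∀ q q' a a', X q a * Y q' a' = Y q' a' * X q a)
    (k : ℕ) (hk1 : k + 1 < m) (z : Fin m → A) :
    stF Ψ (sigT X Y t (k + 1)) (PAl m k) z = stF Ψ (sigT X Y t (k + 1)) (PAl m (k + 1)) z := by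
  have hkm : k < m := by omega
  set fn := fun j : Fin m => sigT X Y t (k + 1) j (z j) with hfn
  have hl1 : PAl m k
      = aFromTo m 0 k ++ ((aFromTo m (k + 2) m).reverse ++ [⟨k + 1, hk1⟩]) ++ [⟨k, hkm⟩] ++ [] := by
    unfold PAl
    rw [aFromTo_eq_cons hk1 hk1, List.reverse_cons, aFromTo_singleton hkm]
    simp [List.append_assoc]
  have hl2 : PAl m (k + 1)
      = aFromTo m 0 k ++ [⟨k, hkm⟩] ++ ((aFromTo m (k + 2) m).reverse ++ [⟨k + 1, hk1⟩]) ++ [] := by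
    unfold PAl
    rw [aFromTo_append (Nat.zero_le k) (Nat.le_succ k) (le_of_lt hk1),
      aFromTo_singleton hkm, aFromTo_singleton hk1]
    simp [List.append_assoc]
  have hc : ∀ x ∈ (aFromTo m (k + 2) m).reverse ++ [(⟨k + 1, hk1⟩ : Fin m)],
      Commute (fn ⟨k, hkm⟩) (fn x) := by
    intro x hx
    have hxval : k + 1 ≤ x.val := by
      rcases List.mem_append.mp hx with h | h
      · have := mem_aFromTo.mp (List.mem_reverse.mp h); omega
      · simp [List.mem_singleton.mp h]
    have hg : fn ⟨k, hkm⟩ = Y (t ⟨k, hkm⟩) (z ⟨k, hkm⟩) := by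
      have hcond : ((⟨k, hkm⟩ : Fin m)).val < k + 1 := Nat.lt_succ_self k
      simp only [hfn, sigT]
      rw [if_pos hcond]
    have hx' : fn x = X (t x) (z x) := by
      have hcond : ¬ (x.val < k + 1) := by omega
      simp only [hfn, sigT]
      rw [if_neg hcond]
    rw [hg, hx']
    exact (hcomm (t x) (t ⟨k, hkm⟩) (z x) (z ⟨k, hkm⟩)).symm
  unfold stF
  rw [hl1, hl2]
  exact congrArg (fun (T : H →L[ℂ] H) => T Ψ)
    (prod_map_move fn (aFromTo m 0 k) ((aFromTo m (k + 2) m).reverse ++ [⟨k + 1, hk1⟩]) []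
      ⟨k, hkm⟩ hc).symm

lemma linkIII (hcomm : ∀ q q' a a', X q a * Y q' a' = Y q' a' * X q a)
    (iv k : ℕ) (hk : k + 1 ≤ iv) (hiv : iv < m) (z : Fin m → A) :
    stF Ψ (sigT X Y t (k + 1)) (RLl m iv (k + 1)) z
      = stF Ψ (sigT X Y t (k + 1))
          ((aFromTo m 0 k ++ (aFromTo m (iv + 1) m).reverse ++ (aFromTo m (k + 1) iv).reverse)
            ++ [⟨k, by omega⟩, ⟨iv, hiv⟩]) z := by
  have hkm : k < m := by omega
  set fn := fun j : Fin m => sigT X Y t (k + 1) j (z j) with hfn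
  set l₂ : List (Fin m) := (aFromTo m (iv + 1) m).reverse ++ (aFromTo m (k + 1) iv).reverse
    with hl₂
  have hl1 : RLl m iv (k + 1)
      = aFromTo m 0 k ++ [⟨k, hkm⟩] ++ l₂ ++ [⟨iv, hiv⟩] := by
    unfold RLl
    rw [aFromTo_append (Nat.zero_le k) (Nat.le_succ k) (by omega),
      aFromTo_singleton hkm, aFromTo_singleton hiv]
    simp [hl₂, List.append_assoc]
  have hl2 : (aFromTo m 0 k ++ (aFromTo m (iv + 1) m).reverse ++ (aFromTo m (k + 1) iv).reverse)
        ++ [(⟨k, hkm⟩ : Fin m), ⟨iv, hiv⟩]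
      = aFromTo m 0 k ++ l₂ ++ [⟨k, hkm⟩] ++ [⟨iv, hiv⟩] := by
    simp [hl₂, List.append_assoc]
  have hc : ∀ x ∈ l₂, Commute (fn ⟨k, hkm⟩) (fn x) := by
    intro x hx
    have hxval : k + 1 ≤ x.val := by
      rcases List.mem_append.mp hx with h | h
      · have := mem_aFromTo.mp (List.mem_reverse.mp h); omega
      · have := mem_aFromTo.mp (List.mem_reverse.mp h); omega
    have hg : fn ⟨k, hkm⟩ = Y (t ⟨k, hkm⟩) (z ⟨k, hkm⟩) := by
      have hcond : ((⟨k, hkm⟩ : Fin m)).val < k + 1 := Nat.lt_succ_self k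
      simp only [hfn, sigT]
      rw [if_pos hcond]
    have hx' : fn x = X (t x) (z x) := by
      have hcond : ¬ (x.val < k + 1) := by omega
      simp only [hfn, sigT]
      rw [if_neg hcond]
    rw [hg, hx']
    exact (hcomm (t x) (t ⟨k, hkm⟩) (z x) (z ⟨k, hkm⟩)).symm
  unfold stF
  rw [hl1, hl2]
  exact congrArg (fun (T : H →L[ℂ] H) => T Ψ)
    (prod_map_move fn (aFromTo m 0 k) l₂ [⟨iv, hiv⟩] ⟨k, hkm⟩ hc)

lemma RLl_eq (iv k : ℕ) (hk : k < iv) (hiv : iv < m) :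
    RLl m iv k
      = (aFromTo m 0 k ++ (aFromTo m (iv + 1) m).reverse ++ (aFromTo m (k + 1) iv).reverse)
        ++ [⟨k, by omega⟩, ⟨iv, hiv⟩] := by
  unfold RLl
  rw [aFromTo_eq_cons hk (by omega), List.reverse_cons, aFromTo_singleton hiv]
  simp [List.append_assoc]

lemma PAl_eq_RLl (iv : ℕ) : PAl m iv = RLl m iv iv := by
  unfold PAl RLl
  rw [aFromTo_self iv iv le_rfl]
  simp

end Main2

section Main3

variable {H : Type*} [NormedAddCommGroup H] [InnerProductSpace ℂ H] [CompleteSpace H]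
variable {A : Type*} [Fintype A] [Nonempty A]
variable {Qn m : ℕ}
variable (X Y : Fin Qn → A → (H →L[ℂ] H)) (t : Fin m → Fin Qn) (Ψ : H)

lemma eraseIdx_append_cons' {α : Type*} (l₁ : List α) (g : α) (l₂ : List α) (n : ℕ)
    (h : n = l₁.length) : (l₁ ++ g :: l₂).eraseIdx n = l₁ ++ l₂ := by
  subst h; exact eraseIdx_append_cons _ _ _

lemma sigT_zero_app (z : Fin m → A) (j : Fin m) :
    sigT X Y t 0 j (z j) = X (t j) (z j) := by
  simp only [sigT]
  rw [if_neg (Nat.not_lt_zero _)]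

lemma stF_orig (hm0 : 0 < m) (z : Fin m → A) :
    (revProd fun j => X (t j) (z j)) Ψ = stF Ψ (sigT X Y t 0) (PAl m 0) z := by
  unfold revProd stF
  have hPA : PAl m 0 = (aFromTo m 1 m).reverse ++ [⟨0, hm0⟩] := by
    unfold PAl
    rw [aFromTo_self 0 0 le_rfl, aFromTo_singleton hm0]
    simp
  have hlist : (List.ofFn fun j => X (t j) (z j)).reverse
      = (PAl m 0).map fun j => sigT X Y t 0 j (z j) := by
    rw [List.ofFn_eq_map, ← aFromTo_zero_eq_finRange, ← List.map_reverse, hPA]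
    have h0 : (aFromTo m 0 m).reverse = (aFromTo m 1 m).reverse ++ [⟨0, hm0⟩] := by
      rw [aFromTo_eq_cons hm0 hm0, List.reverse_cons]
    rw [h0]
    exact List.map_congr_left fun j _ => (sigT_zero_app X Y t z j).symm
  rw [hlist]

lemma stF_tgt (i : Fin m) (z : Fin m → A) :
    (((List.ofFn fun j => X (t j) (z j)).eraseIdx i).reverse.prod * X (t i) (z i)) Ψ
      = stF Ψ (sigT X Y t 0) (RLl m i.val 0) z := by
  have him : i.val < m := i.isLt
  have hRL : RLl m i.val 0
      = ((aFromTo m (i.val + 1) m).reverse ++ (aFromTo m 0 i.val).reverse) ++ [i] := by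
    unfold RLl
    rw [aFromTo_self 0 0 le_rfl, aFromTo_singleton him, Fin.eta]
    simp [List.append_assoc]
  rw [hRL, stF_snoc]
  have hσi : sigT X Y t 0 i (z i) = X (t i) (z i) := sigT_zero_app X Y t z i
  rw [hσi, ContinuousLinearMap.mul_apply]
  congr 1
  have herase : (List.ofFn fun j => X (t j) (z j)).eraseIdx i.val
      = (aFromTo m 0 i.val ++ aFromTo m (i.val + 1) m).map fun j => X (t j) (z j) := by
    rw [List.ofFn_eq_map, ← aFromTo_zero_eq_finRange, map_eraseIdx]
    congr 1
    have hsplit : aFromTo m 0 m = aFromTo m 0 i.val ++ (i :: aFromTo m (i.val + 1) m) := by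
      rw [aFromTo_append (Nat.zero_le _) (le_of_lt him) le_rfl,
        aFromTo_eq_cons him him, Fin.eta]
    rw [hsplit]
    have hlen : (i.val : ℕ) = (aFromTo m 0 i.val).length := by
      rw [length_aFromTo (le_of_lt him)]; omega
    exact eraseIdx_append_cons' _ _ _ _ hlen
  rw [herase]
  congr 1
  have hmapc : ((aFromTo m (i.val + 1) m).reverse ++ (aFromTo m 0 i.val).reverse).map
        (fun j => sigT X Y t 0 j (z j))
      = ((aFromTo m (i.val + 1) m).reverse ++ (aFromTo m 0 i.val).reverse).map
        (fun j => X (t j) (z j)) :=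
    List.map_congr_left fun j _ => sigT_zero_app X Y t z j
  rw [hmapc, ← List.map_reverse, List.reverse_append]

end Main3

section Main4

variable {H : Type*} [NormedAddCommGroup H] [InnerProductSpace ℂ H] [CompleteSpace H]
variable {A : Type*} [Fintype A] [Nonempty A]
variable {Qn m : ℕ}
variable (X Y : Fin Qn → A → (H →L[ℂ] H)) (t : Fin m → Fin Qn) (Ψ : H)

lemma phase1 (hXpos : ∀ q a, (X q a).IsPositive) (hYpos : ∀ q a, (Y q a).IsPositive)
    (hXsum : ∀ q, ∑ a, X q a ^ 2 = 1) (hYsum : ∀ q, ∑ a, Y q a ^ 2 = 1)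
    (hcomm : ∀ q q' a a', X q a * Y q' a' = Y q' a' * X q a)
    (hΨn : (⟪Ψ, Ψ⟫ : ℂ) = 1) (i : Fin m) :
    ∀ k, k ≤ i.val →
      (1 / 2) * ∑ z : Fin m → A, |‖stF Ψ (sigT X Y t 0) (PAl m 0) z‖ ^ 2 -
          ‖stF Ψ (sigT X Y t k) (PAl m k) z‖ ^ 2|
        ≤ ∑ s ∈ Finset.range k, d1v X Y t Ψ s := by
  intro k
  induction k with
  | zero => intro _; simp
  | succ k ih =>
    intro hk1
    have hki : k < i.val := by omega
    have hkm : k < m := lt_trans hki i.isLt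
    have hkm1 : k + 1 < m := lt_of_le_of_lt hk1 i.isLt
    set kF : Fin m := ⟨k, hkm⟩ with hkF
    have hkFv : kF.val = k := rfl
    set Lp : List (Fin m) := aFromTo m 0 k ++ (aFromTo m (k + 1) m).reverse with hLp
    have hnd : Lp.Nodup := by
      rw [hLp, List.nodup_append']
      refine ⟨nodup_aFromTo, List.nodup_reverse.mpr nodup_aFromTo, ?_⟩
      intro x hx hx'
      have h1 := (mem_aFromTo.mp hx).2
      have h2 := (mem_aFromTo.mp (List.mem_reverse.mp hx')).1
      omega
    have hlen : Lp.length + 1 = Fintype.card (Fin m) := by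
      rw [hLp, List.length_append, List.length_reverse, length_aFromTo (le_of_lt hkm),
        length_aFromTo le_rfl, Fintype.card_fin]
      omega
    have hknot : kF ∉ Lp := by
      rw [hLp, List.mem_append]
      rintro (h | h)
      · have := (mem_aFromTo.mp h).2; omega
      · have := (mem_aFromTo.mp (List.mem_reverse.mp h)).1; omega
    have hPA : PAl m k = Lp ++ [kF] := by
      unfold PAl
      rw [aFromTo_singleton hkm]
    set x : A → H := fun a => X (t kF) a Ψ with hx
    set y : A → H := fun a => Y (t kF) a Ψ with hy
    have hx1 : ∑ b, (⟪x b, x b⟫ : ℂ) = 1 :=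
      (sum_inner_collapse (X (t kF)) (fun a => (hXpos _ a).isSelfAdjoint) (hXsum _) Ψ Ψ).trans
        hΨn
    have hy1 : ∑ b, (⟪y b, y b⟫ : ℂ) = 1 :=
      (sum_inner_collapse (Y (t kF)) (fun a => (hYpos _ a).isSelfAdjoint) (hYsum _) Ψ Ψ).trans
        hΨn
    have hkey := key1 (sigT X Y t k) (sigT_sa X Y t hXpos hYpos k) (sigT_sq X Y t hXsum hYsum k)
      Lp hnd hlen kF hknot x y hx1 hy1
    have hV : ∀ z : Fin m → A, stF Ψ (sigT X Y t k) (PAl m k) z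
        = ((Lp.map fun j => sigT X Y t k j (z j)).prod) (x (z kF)) := by
      intro z
      rw [hPA, stF_snoc]
      have hbot : sigT X Y t k kF (z kF) Ψ = x (z kF) := by
        simp only [sigT, hx]
        rw [if_neg (by omega : ¬ kF.val < k)]
      rw [hbot]
    have hW : ∀ z : Fin m → A, stF Ψ (sigT X Y t (k + 1)) (PAl m (k + 1)) z
        = ((Lp.map fun j => sigT X Y t k j (z j)).prod) (y (z kF)) := by
      intro z
      rw [← linkI X Y t Ψ hcomm k hkm1 z, hPA, stF_snoc]
      have hbot : sigT X Y t (k + 1) kF (z kF) Ψ = Y (t kF) (z kF) Ψ := by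
        simp only [sigT]
        rw [if_pos (Nat.lt_succ_self k)]
      have hy' : Y (t kF) (z kF) Ψ = y (z kF) := by rw [hy]
      rw [hbot, hy']
      have hmap : (Lp.map fun j => sigT X Y t (k + 1) j (z j))
          = (Lp.map fun j => sigT X Y t k j (z j)) := by
        apply List.map_congr_left
        intro j hj
        have hiff : (j.val < k + 1) ↔ (j.val < k) := by
          rcases List.mem_append.mp hj with h | h
          · have := (mem_aFromTo.mp h).2; constructor <;> (intro; omega)
          · have := (mem_aFromTo.mp (List.mem_reverse.mp h)).1; constructor <;> (intro; omega)
        simp only [sigT]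
        exact congrArg (fun T : A → (H →L[ℂ] H) => T (z j)) (if_congr hiff rfl rfl)
      rw [hmap]
    have hstep : (1 / 2) * ∑ z : Fin m → A, |‖stF Ψ (sigT X Y t k) (PAl m k) z‖ ^ 2 -
        ‖stF Ψ (sigT X Y t (k + 1)) (PAl m (k + 1)) z‖ ^ 2| ≤ d1v X Y t Ψ k := by
      have heq : ∑ z : Fin m → A, |‖stF Ψ (sigT X Y t k) (PAl m k) z‖ ^ 2 -
          ‖stF Ψ (sigT X Y t (k + 1)) (PAl m (k + 1)) z‖ ^ 2|
          = ∑ z : Fin m → A, |‖((Lp.map fun j => sigT X Y t k j (z j)).prod) (x (z kF))‖ ^ 2 -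
            ‖((Lp.map fun j => sigT X Y t k j (z j)).prod) (y (z kF))‖ ^ 2| :=
        Finset.sum_congr rfl fun z _ => by rw [hV z, hW z]
      rw [heq]
      refine le_trans hkey ?_
      rw [d1v, dif_pos hkm]
    calc (1 / 2) * ∑ z : Fin m → A, |‖stF Ψ (sigT X Y t 0) (PAl m 0) z‖ ^ 2 -
          ‖stF Ψ (sigT X Y t (k + 1)) (PAl m (k + 1)) z‖ ^ 2|
        ≤ (1 / 2) * ∑ z : Fin m → A, (|‖stF Ψ (sigT X Y t 0) (PAl m 0) z‖ ^ 2 -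
            ‖stF Ψ (sigT X Y t k) (PAl m k) z‖ ^ 2| +
            |‖stF Ψ (sigT X Y t k) (PAl m k) z‖ ^ 2 -
            ‖stF Ψ (sigT X Y t (k + 1)) (PAl m (k + 1)) z‖ ^ 2|) := by
          apply mul_le_mul_of_nonneg_left _ (by norm_num)
          exact Finset.sum_le_sum fun z _ => abs_sub_le _ _ _
      _ = (1 / 2) * ∑ z : Fin m → A, |‖stF Ψ (sigT X Y t 0) (PAl m 0) z‖ ^ 2 -
            ‖stF Ψ (sigT X Y t k) (PAl m k) z‖ ^ 2| +
          (1 / 2) * ∑ z : Fin m → A, |‖stF Ψ (sigT X Y t k) (PAl m k) z‖ ^ 2 -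
            ‖stF Ψ (sigT X Y t (k + 1)) (PAl m (k + 1)) z‖ ^ 2| := by
          rw [Finset.sum_add_distrib]; ring
      _ ≤ (∑ s ∈ Finset.range k, d1v X Y t Ψ s) + d1v X Y t Ψ k :=
          add_le_add (ih (le_of_lt hki)) hstep
      _ = ∑ s ∈ Finset.range (k + 1), d1v X Y t Ψ s := (Finset.sum_range_succ _ _).symm

end Main4

section Main5

variable {H : Type*} [NormedAddCommGroup H] [InnerProductSpace ℂ H] [CompleteSpace H]
variable {A : Type*} [Fintype A] [Nonempty A]
variable {Qn m : ℕ}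
variable (X Y : Fin Qn → A → (H →L[ℂ] H)) (t : Fin m → Fin Qn) (Ψ : H)

lemma phase3 (hXpos : ∀ q a, (X q a).IsPositive) (hYpos : ∀ q a, (Y q a).IsPositive)
    (hXsum : ∀ q, ∑ a, X q a ^ 2 = 1) (hYsum : ∀ q, ∑ a, Y q a ^ 2 = 1)
    (hcomm : ∀ q q' a a', X q a * Y q' a' = Y q' a' * X q a)
    (hΨn : (⟪Ψ, Ψ⟫ : ℂ) = 1) (i : Fin m) :
    ∀ k, k ≤ i.val →
      (1 / 2) * ∑ z : Fin m → A, |‖stF Ψ (sigT X Y t k) (RLl m i.val k) z‖ ^ 2 -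
          ‖stF Ψ (sigT X Y t 0) (RLl m i.val 0) z‖ ^ 2|
        ≤ ∑ s ∈ Finset.range k, (d1v X Y t Ψ s + d4v X t Ψ i s) := by
  intro k
  induction k with
  | zero => intro _; simp
  | succ k ih =>
    intro hk1
    have hki : k < i.val := by omega
    have him : i.val < m := i.isLt
    have hkm : k < m := lt_trans hki him
    set kF : Fin m := ⟨k, hkm⟩ with hkF
    have hkFv : kF.val = k := rfl
    have hiv : i.val = i.val := rfl
    set Lq : List (Fin m) := aFromTo m 0 k ++ (aFromTo m (i.val + 1) m).reverse ++
      (aFromTo m (k + 1) i.val).reverse with hLq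
    have hmemLq : ∀ x : Fin m, x ∈ Lq → (x.val < k ∨ (i.val + 1 ≤ x.val) ∨
        (k + 1 ≤ x.val ∧ x.val < i.val)) := by
      intro x hx
      rcases List.mem_append.mp hx with h | h
      · rcases List.mem_append.mp h with h' | h'
        · exact Or.inl (mem_aFromTo.mp h').2
        · exact Or.inr (Or.inl (mem_aFromTo.mp (List.mem_reverse.mp h')).1)
      · have := mem_aFromTo.mp (List.mem_reverse.mp h)
        exact Or.inr (Or.inr this)
    have hnd : Lq.Nodup := by
      rw [hLq, List.nodup_append', List.nodup_append']
      refine ⟨⟨nodup_aFromTo, List.nodup_reverse.mpr nodup_aFromTo, ?_⟩,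
        List.nodup_reverse.mpr nodup_aFromTo, ?_⟩
      · intro x hx hx'
        have h1 := (mem_aFromTo.mp hx).2
        have h2 := (mem_aFromTo.mp (List.mem_reverse.mp hx')).1
        omega
      · intro x hx hx'
        have h2 := mem_aFromTo.mp (List.mem_reverse.mp hx')
        rcases List.mem_append.mp hx with h | h
        · have := (mem_aFromTo.mp h).2; omega
        · have := (mem_aFromTo.mp (List.mem_reverse.mp h)).1; omega
    have hlen : Lq.length + 2 = Fintype.card (Fin m) := by
      rw [hLq, List.length_append, List.length_append, List.length_reverse,
        List.length_reverse, length_aFromTo (le_of_lt hkm), length_aFromTo le_rfl,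
        length_aFromTo (le_of_lt him), Fintype.card_fin]
      omega
    have hknot : kF ∉ Lq := fun hc => by
      rcases hmemLq kF hc with h | h | h <;> omega
    have hinot : i ∉ Lq := fun hc => by
      rcases hmemLq i hc with h | h | h <;> omega
    have hkne : kF ≠ i := Fin.ne_of_val_ne (by omega)
    set B : A → A → H := fun a b => Y (t kF) a (X (t i) b Ψ) with hB
    set C : A → A → H := fun a b => X (t i) b (X (t kF) a Ψ) with hC
    set Cn : A → A → H := fun a b => X (t kF) a (X (t i) b Ψ) with hCn
    have hXsa : ∀ q a, IsSelfAdjoint (X q a) := fun q a => (hXpos q a).isSelfAdjoint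
    have hYsa : ∀ q a, IsSelfAdjoint (Y q a) := fun q a => (hYpos q a).isSelfAdjoint
    have hB1 : ∑ a, ∑ b, (⟪B a b, B a b⟫ : ℂ) = 1 := by
      rw [Finset.sum_comm]
      have h1 : ∀ b : A, ∑ a, (⟪B a b, B a b⟫ : ℂ) = ⟪X (t i) b Ψ, X (t i) b Ψ⟫ := fun b =>
        sum_inner_collapse (Y (t kF)) (hYsa _) (hYsum _) _ _
      rw [Finset.sum_congr rfl fun b _ => h1 b]
      exact (sum_inner_collapse (X (t i)) (hXsa _) (hXsum _) Ψ Ψ).trans hΨn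
    have hC1 : ∑ a, ∑ b, (⟪C a b, C a b⟫ : ℂ) = 1 := by
      have h1 : ∀ a : A, ∑ b, (⟪C a b, C a b⟫ : ℂ) = ⟪X (t kF) a Ψ, X (t kF) a Ψ⟫ := fun a =>
        sum_inner_collapse (X (t i)) (hXsa _) (hXsum _) _ _
      rw [Finset.sum_congr rfl fun a _ => h1 a]
      exact (sum_inner_collapse (X (t kF)) (hXsa _) (hXsum _) Ψ Ψ).trans hΨn
    have hCn1 : ∑ a, ∑ b, (⟪Cn a b, Cn a b⟫ : ℂ) = 1 := by
      rw [Finset.sum_comm]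
      have h1 : ∀ b : A, ∑ a, (⟪Cn a b, Cn a b⟫ : ℂ) = ⟪X (t i) b Ψ, X (t i) b Ψ⟫ := fun b =>
        sum_inner_collapse (X (t kF)) (hXsa _) (hXsum _) _ _
      rw [Finset.sum_congr rfl fun b _ => h1 b]
      exact (sum_inner_collapse (X (t i)) (hXsa _) (hXsum _) Ψ Ψ).trans hΨn
    have hkey1 := key2 (sigT X Y t k) (sigT_sa X Y t hXpos hYpos k)
      (sigT_sq X Y t hXsum hYsum k) Lq hnd hlen kF i hkne hknot hinot B C hB1 hC1
    have hkey2 := key2 (sigT X Y t k) (sigT_sa X Y t hXpos hYpos k)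
      (sigT_sq X Y t hXsum hYsum k) Lq hnd hlen kF i hkne hknot hinot C Cn hC1 hCn1
    -- identify the first bound with d1v
    have hid1 : tdistFam (fun p : A × A => B p.1 p.2) (fun p : A × A => C p.1 p.2)
        = d1v X Y t Ψ k := by
      have hcommv : ∀ a b, Y (t kF) a (X (t i) b Ψ) = X (t i) b (Y (t kF) a Ψ) := by
        intro a b
        have := congrArg (fun T : H →L[ℂ] H => T Ψ) (hcomm (t i) (t kF) b a)
        simpa [ContinuousLinearMap.mul_apply] using this.symm
      have hsum1 : ∑ p : A × A, (⟪B p.1 p.2, C p.1 p.2⟫ : ℂ)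
          = ∑ a, ⟪Y (t kF) a Ψ, X (t kF) a Ψ⟫ := by
        rw [Fintype.sum_prod_type]
        have h1 : ∀ a : A, ∑ b, (⟪B a b, C a b⟫ : ℂ) = ⟪Y (t kF) a Ψ, X (t kF) a Ψ⟫ := by
          intro a
          have h2 : ∀ b : A, (⟪B a b, C a b⟫ : ℂ)
              = ⟪X (t i) b (Y (t kF) a Ψ), X (t i) b (X (t kF) a Ψ)⟫ := by
            intro b
            rw [hB, hC]
            dsimp only
            rw [hcommv a b]
          rw [Finset.sum_congr rfl fun b _ => h2 b]
          exact sum_inner_collapse (X (t i)) (hXsa _) (hXsum _) _ _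
        exact Finset.sum_congr rfl fun a _ => h1 a
      rw [d1v, dif_pos hkm]
      rw [tdistFam_eq_of_norm_eq _ _ (fun a => Y (t kF) a Ψ) (fun a => X (t kF) a Ψ)
        (congrArg norm hsum1)]
      exact tdistFam_comm _ _
    -- identify the second bound with d4v
    have hid2 : tdistFam (fun p : A × A => C p.1 p.2) (fun p : A × A => Cn p.1 p.2)
        = d4v X t Ψ i k := by
      rw [d4v, dif_pos hkm]
      apply tdistFam_eq_of_norm_eq
      have hconj : ∑ p : A × A, (⟪C p.1 p.2, Cn p.1 p.2⟫ : ℂ)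
          = starRingEnd ℂ (∑ p : A × A, (⟪X (t ⟨k, hkm⟩) p.2 (X (t i) p.1 Ψ),
              X (t i) p.1 (X (t ⟨k, hkm⟩) p.2 Ψ)⟫ : ℂ)) := by
        rw [map_sum, Fintype.sum_prod_type, Fintype.sum_prod_type]
        rw [Finset.sum_comm]
        apply Finset.sum_congr rfl
        intro a _
        apply Finset.sum_congr rfl
        intro b _
        rw [hC, hCn]
        dsimp only
        rw [inner_conj_symm]
      rw [hconj, RCLike.norm_conj]
    -- the three chain states
    set Vf : (Fin m → A) → H :=
      fun z => ((Lq.map fun j => sigT X Y t k j (z j)).prod) (B (z kF) (z i)) with hVf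
    set Mf : (Fin m → A) → H :=
      fun z => ((Lq.map fun j => sigT X Y t k j (z j)).prod) (C (z kF) (z i)) with hMf
    set Nf : (Fin m → A) → H :=
      fun z => ((Lq.map fun j => sigT X Y t k j (z j)).prod) (Cn (z kF) (z i)) with hNf
    have hV : ∀ z : Fin m → A, stF Ψ (sigT X Y t (k + 1)) (RLl m i.val (k + 1)) z = Vf z := by
      intro z
      rw [linkIII X Y t Ψ hcomm i.val k hk1 him z]
      rw [show ((⟨i.val, him⟩ : Fin m)) = i from Fin.eta i him]
      rw [stF_snoc2]
      have hbot : sigT X Y t (k + 1) ⟨k, by omega⟩ (z ⟨k, by omega⟩)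
            (sigT X Y t (k + 1) i (z i) Ψ)
          = B (z kF) (z i) := by
        simp only [sigT, hB]
        rw [if_pos (Nat.lt_succ_self k), if_neg (by omega : ¬ i.val < k + 1)]
      rw [hbot]
      have hmap : (Lq.map fun j => sigT X Y t (k + 1) j (z j))
          = (Lq.map fun j => sigT X Y t k j (z j)) := by
        apply List.map_congr_left
        intro j hj
        have hiff : (j.val < k + 1) ↔ (j.val < k) := by
          rcases hmemLq j hj with h | h | h <;> (constructor <;> (intro; omega))
        simp only [sigT]
        exact congrArg (fun T : A → (H →L[ℂ] H) => T (z j)) (if_congr hiff rfl rfl)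
      rw [hmap]
    have hN : ∀ z : Fin m → A, stF Ψ (sigT X Y t k) (RLl m i.val k) z = Nf z := by
      intro z
      rw [RLl_eq i.val k hki him]
      rw [show ((⟨i.val, him⟩ : Fin m)) = i from Fin.eta i him]
      rw [stF_snoc2]
      have hbot : sigT X Y t k ⟨k, by omega⟩ (z ⟨k, by omega⟩) (sigT X Y t k i (z i) Ψ)
          = Cn (z kF) (z i) := by
        simp only [sigT, hCn]
        rw [if_neg (by omega : ¬ k < k), if_neg (by omega : ¬ i.val < k)]
      rw [hbot]
    -- assemble
    have hstep1 : (1 / 2) * ∑ z : Fin m → A, |‖Vf z‖ ^ 2 - ‖Mf z‖ ^ 2| ≤ d1v X Y t Ψ k := by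
      rw [← hid1]; exact hkey1
    have hstep2 : (1 / 2) * ∑ z : Fin m → A, |‖Mf z‖ ^ 2 - ‖Nf z‖ ^ 2| ≤ d4v X t Ψ i k := by
      rw [← hid2]; exact hkey2
    calc (1 / 2) * ∑ z : Fin m → A, |‖stF Ψ (sigT X Y t (k + 1)) (RLl m i.val (k + 1)) z‖ ^ 2 -
          ‖stF Ψ (sigT X Y t 0) (RLl m i.val 0) z‖ ^ 2|
        ≤ (1 / 2) * ∑ z : Fin m → A, (|‖Vf z‖ ^ 2 - ‖Mf z‖ ^ 2| + (|‖Mf z‖ ^ 2 - ‖Nf z‖ ^ 2| +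
            |‖Nf z‖ ^ 2 - ‖stF Ψ (sigT X Y t 0) (RLl m i.val 0) z‖ ^ 2|)) := by
          apply mul_le_mul_of_nonneg_left _ (by norm_num)
          apply Finset.sum_le_sum
          intro z _
          rw [hV z]
          calc |‖Vf z‖ ^ 2 - ‖stF Ψ (sigT X Y t 0) (RLl m i.val 0) z‖ ^ 2|
              ≤ |‖Vf z‖ ^ 2 - ‖Mf z‖ ^ 2| +
                |‖Mf z‖ ^ 2 - ‖stF Ψ (sigT X Y t 0) (RLl m i.val 0) z‖ ^ 2| :=
                abs_sub_le _ _ _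
            _ ≤ |‖Vf z‖ ^ 2 - ‖Mf z‖ ^ 2| + (|‖Mf z‖ ^ 2 - ‖Nf z‖ ^ 2| +
                |‖Nf z‖ ^ 2 - ‖stF Ψ (sigT X Y t 0) (RLl m i.val 0) z‖ ^ 2|) :=
                add_le_add_right (abs_sub_le _ _ _) _
      _ = (1 / 2) * ∑ z : Fin m → A, |‖Vf z‖ ^ 2 - ‖Mf z‖ ^ 2| +
          ((1 / 2) * ∑ z : Fin m → A, |‖Mf z‖ ^ 2 - ‖Nf z‖ ^ 2| +
           (1 / 2) * ∑ z : Fin m → A, |‖Nf z‖ ^ 2 -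
              ‖stF Ψ (sigT X Y t 0) (RLl m i.val 0) z‖ ^ 2|) := by
          rw [Finset.sum_add_distrib, Finset.sum_add_distrib]; ring
      _ ≤ d1v X Y t Ψ k + (d4v X t Ψ i k +
            ∑ s ∈ Finset.range k, (d1v X Y t Ψ s + d4v X t Ψ i s)) := by
          apply add_le_add hstep1
          apply add_le_add hstep2
          have heq : ∑ z : Fin m → A, |‖Nf z‖ ^ 2 -
              ‖stF Ψ (sigT X Y t 0) (RLl m i.val 0) z‖ ^ 2|
              = ∑ z : Fin m → A, |‖stF Ψ (sigT X Y t k) (RLl m i.val k) z‖ ^ 2 -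
                ‖stF Ψ (sigT X Y t 0) (RLl m i.val 0) z‖ ^ 2| :=
            Finset.sum_congr rfl fun z _ => by rw [hN z]
          rw [heq]
          exact ih (le_of_lt hki)
      _ = ∑ s ∈ Finset.range (k + 1), (d1v X Y t Ψ s + d4v X t Ψ i s) := by
          rw [Finset.sum_range_succ]; ring

end Main5

theorem selection_reordering_bound {H : Type*} [NormedAddCommGroup H]
    [InnerProductSpace ℂ H] [CompleteSpace H] {A : Type*} [Fintype A] [Nonempty A]
    (Qn : ℕ) (hQn : 0 < Qn)
    (Ψ : H) (hΨ : ‖Ψ‖ = 1)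
    (X Y : Fin Qn → A → (H →L[ℂ] H))
    (hXpos : ∀ q a, (X q a).IsPositive) (hYpos : ∀ q a, (Y q a).IsPositive)
    (hXsum : ∀ q, ∑ a, X q a ^ 2 = 1) (hYsum : ∀ q, ∑ a, Y q a ^ 2 = 1)
    (hcomm : ∀ q q' a a', X q a * Y q' a' = Y q' a' * X q a)
    (m : ℕ) (hm : 1 ≤ m) (t : Fin m → Fin Qn) (i : Fin m) :
    (1 / 2) * ∑ z : Fin m → A,
        |‖(revProd fun j => X (t j) (z j)) Ψ‖ ^ 2 -
          ‖(((List.ofFn fun j => X (t j) (z j)).eraseIdx i).reverse.prod * X (t i) (z i)) Ψ‖ ^ 2|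
      ≤ 2 * (∑ j ∈ Finset.Iio i, tdistFam (fun a => (X (t j) a) Ψ) (fun a => (Y (t j) a) Ψ)) +
        ∑ j ∈ Finset.Iio i,
          tdistFam (fun p : A × A => (X (t j) p.2) ((X (t i) p.1) Ψ))
            (fun p : A × A => (X (t i) p.1) ((X (t j) p.2) Ψ)) := by
  have hm0 : 0 < m := hm
  have hΨn : (⟪Ψ, Ψ⟫ : ℂ) = 1 := by
    rw [inner_self_eq_norm_sq_to_K, hΨ]; norm_num
  have h1 := phase1 X Y t Ψ hXpos hYpos hXsum hYsum hcomm hΨn i i.val le_rfl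
  have h3 := phase3 X Y t Ψ hXpos hYpos hXsum hYsum hcomm hΨn i i.val le_rfl
  have hbridge : ∀ z : Fin m → A, stF Ψ (sigT X Y t i.val) (PAl m i.val) z
      = stF Ψ (sigT X Y t i.val) (RLl m i.val i.val) z := fun z => by rw [PAl_eq_RLl]
  -- rewrite the goal's LHS sum
  have hgoalsum : ∑ z : Fin m → A,
      |‖(revProd fun j => X (t j) (z j)) Ψ‖ ^ 2 -
        ‖(((List.ofFn fun j => X (t j) (z j)).eraseIdx i).reverse.prod * X (t i) (z i)) Ψ‖ ^ 2|
      = ∑ z : Fin m → A, |‖stF Ψ (sigT X Y t 0) (PAl m 0) z‖ ^ 2 -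
          ‖stF Ψ (sigT X Y t 0) (RLl m i.val 0) z‖ ^ 2| := by
    apply Finset.sum_congr rfl
    intro z _
    rw [stF_orig X Y t Ψ hm0 z, stF_tgt X Y t Ψ i z]
  -- the combined bound
  have hmain : (1 / 2) * ∑ z : Fin m → A, |‖stF Ψ (sigT X Y t 0) (PAl m 0) z‖ ^ 2 -
      ‖stF Ψ (sigT X Y t 0) (RLl m i.val 0) z‖ ^ 2|
      ≤ (∑ s ∈ Finset.range i.val, d1v X Y t Ψ s) +
        ∑ s ∈ Finset.range i.val, (d1v X Y t Ψ s + d4v X t Ψ i s) := by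
    calc (1 / 2) * ∑ z : Fin m → A, |‖stF Ψ (sigT X Y t 0) (PAl m 0) z‖ ^ 2 -
        ‖stF Ψ (sigT X Y t 0) (RLl m i.val 0) z‖ ^ 2|
        ≤ (1 / 2) * ∑ z : Fin m → A,
            (|‖stF Ψ (sigT X Y t 0) (PAl m 0) z‖ ^ 2 -
              ‖stF Ψ (sigT X Y t i.val) (PAl m i.val) z‖ ^ 2| +
             |‖stF Ψ (sigT X Y t i.val) (RLl m i.val i.val) z‖ ^ 2 -
              ‖stF Ψ (sigT X Y t 0) (RLl m i.val 0) z‖ ^ 2|) := by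
          apply mul_le_mul_of_nonneg_left _ (by norm_num)
          apply Finset.sum_le_sum
          intro z _
          have := abs_sub_le (‖stF Ψ (sigT X Y t 0) (PAl m 0) z‖ ^ 2)
            (‖stF Ψ (sigT X Y t i.val) (PAl m i.val) z‖ ^ 2)
            (‖stF Ψ (sigT X Y t 0) (RLl m i.val 0) z‖ ^ 2)
          rw [hbridge z] at this
          convert this using 3
          all_goals first | rfl | rw [hbridge z]
      _ = (1 / 2) * ∑ z : Fin m → A, |‖stF Ψ (sigT X Y t 0) (PAl m 0) z‖ ^ 2 -
            ‖stF Ψ (sigT X Y t i.val) (PAl m i.val) z‖ ^ 2| +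
          (1 / 2) * ∑ z : Fin m → A, |‖stF Ψ (sigT X Y t i.val) (RLl m i.val i.val) z‖ ^ 2 -
            ‖stF Ψ (sigT X Y t 0) (RLl m i.val 0) z‖ ^ 2| := by
          rw [Finset.sum_add_distrib]; ring
      _ ≤ (∑ s ∈ Finset.range i.val, d1v X Y t Ψ s) +
          ∑ s ∈ Finset.range i.val, (d1v X Y t Ψ s + d4v X t Ψ i s) := add_le_add h1 h3
  -- identify the sums over `range i.val` with the sums over `Iio i`
  have hsum1 : ∑ s ∈ Finset.range i.val, d1v X Y t Ψ s
      = ∑ j ∈ Finset.Iio i, tdistFam (fun a => (X (t j) a) Ψ) (fun a => (Y (t j) a) Ψ) := by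
    apply Finset.sum_nbij' (i := fun s => (⟨s % m, Nat.mod_lt _ hm0⟩ : Fin m))
      (j := fun (j : Fin m) => j.val)
    · intro s hs
      have hsi : s < i.val := Finset.mem_range.mp hs
      have : s % m = s := Nat.mod_eq_of_lt (by omega)
      simp only [Finset.mem_Iio]
      rw [Fin.lt_def]
      simp [this]
      omega
    · intro j hj
      exact Finset.mem_range.mpr (Fin.lt_def.mp (Finset.mem_Iio.mp hj))
    · intro s hs
      have hsi : s < i.val := Finset.mem_range.mp hs
      simp [Nat.mod_eq_of_lt (show s < m by omega)]
    · intro j hj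
      apply Fin.ext
      simp [Nat.mod_eq_of_lt j.isLt]
    · intro s hs
      have hsi : s < i.val := Finset.mem_range.mp hs
      have hsm : s < m := by omega
      rw [d1v, dif_pos hsm]
      congr 1 <;> · funext a; congr 2 <;> · congr 1; exact Fin.ext (by simp [Nat.mod_eq_of_lt hsm])
  have hsum4 : ∑ s ∈ Finset.range i.val, d4v X t Ψ i s
      = ∑ j ∈ Finset.Iio i, tdistFam (fun p : A × A => (X (t j) p.2) ((X (t i) p.1) Ψ))
          (fun p : A × A => (X (t i) p.1) ((X (t j) p.2) Ψ)) := by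
    apply Finset.sum_nbij' (i := fun s => (⟨s % m, Nat.mod_lt _ hm0⟩ : Fin m))
      (j := fun (j : Fin m) => j.val)
    · intro s hs
      have hsi : s < i.val := Finset.mem_range.mp hs
      have : s % m = s := Nat.mod_eq_of_lt (by omega)
      simp only [Finset.mem_Iio]
      rw [Fin.lt_def]
      simp [this]
      omega
    · intro j hj
      exact Finset.mem_range.mpr (Fin.lt_def.mp (Finset.mem_Iio.mp hj))
    · intro s hs
      have hsi : s < i.val := Finset.mem_range.mp hs
      simp [Nat.mod_eq_of_lt (show s < m by omega)]
    · intro j hj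
      apply Fin.ext
      simp [Nat.mod_eq_of_lt j.isLt]
    · intro s hs
      have hsi : s < i.val := Finset.mem_range.mp hs
      have hsm : s < m := by omega
      rw [d4v, dif_pos hsm]
      congr 1 <;> · funext p; congr 2 <;> · congr 1; exact Fin.ext (by simp [Nat.mod_eq_of_lt hsm])
  rw [hgoalsum]
  refine le_trans hmain ?_
  rw [Finset.sum_add_distrib, hsum1, hsum4]
  ring_nf
  exact le_refl _
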